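/- For a chain π ∈ S_n, the generating function of the left-enriched order polynomial satisfies Σ_{m≥0} op_π(m) t^m = (4t)^{lpk(π)}·(1+t)^{n-2lpk(π)}/(1-t)^{n+1}, where op_π(m) = 4^{lpk(π)}·Σ_{a≥0} C(n+m-a, n)·C(n-2lpk(π), a-lpk(π)). -/

import Mathlib

/-- The value of the permutation at position `j` (1-indexed), shifted by 1,
with the convention that out-of-range positions (in particular `j = 0`) give `0`. -/
def pval {n : ℕ} (π : Equiv.Perm (Fin n)) (j : ℕ) : ℕ :=
  if h : 1 ≤ j ∧ j ≤ n then ((π ⟨j - 1, by omega⟩ : Fin n) : ℕ) + 1 else 0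

/-- Number of descents of `π`: indices `i ∈ {1,…,n-1}` with `π(i) > π(i+1)`. -/
def des {n : ℕ} (π : Equiv.Perm (Fin n)) : ℕ :=
  ((Finset.Icc 1 (n - 1)).filter (fun i => pval π (i + 1) < pval π i)).card

/-- Number of left peaks of `π`: indices `i ∈ {1,…,n-1}` with
`π(i-1) < π(i) > π(i+1)`, with the convention `π(0) = 0`. -/
def lpk {n : ℕ} (π : Equiv.Perm (Fin n)) : ℕ :=
  ((Finset.Icc 1 (n - 1)).filter
    (fun i => pval π (i - 1) < pval π i ∧ pval π (i + 1) < pval π i)).card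

/-- Number of interior peaks of `π`: indices `i ∈ {2,…,n-1}` with
`π(i-1) < π(i) > π(i+1)`. -/
def pk {n : ℕ} (π : Equiv.Perm (Fin n)) : ℕ :=
  ((Finset.Icc 2 (n - 1)).filter
    (fun i => pval π (i - 1) < pval π i ∧ pval π (i + 1) < pval π i)).card

/-- Binomial coefficient for integer arguments, with the convention that it is
zero when `b < 0` or `a < b`. -/
def zchoose (a b : ℤ) : ℤ :=
  if 0 ≤ b ∧ b ≤ a then ((a.toNat).choose b.toNat : ℤ) else 0

/-- The left-enriched order polynomial of a chain on `n` elements with `k` left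
peaks, evaluated at `m`:  `4^k · Σ_{a≥0} C(n+m-a, n)·C(n-2k, a-k)`
(reindexed by `a = k + b`; terms with `b > n` vanish). -/
def opL (n k m : ℕ) : ℤ :=
  4 ^ k * ∑ b ∈ Finset.range (n + 1),
    zchoose ((n : ℤ) + m - (k + b)) n * zchoose ((n : ℤ) - 2 * k) b

/-- The enriched order polynomial of a chain on `n` elements with `k` peaks,
evaluated at `m`: `2·4^k · Σ_{a≥0} C(n-1+m-a, n)·C(n-1-2k, a-k)`
(reindexed by `a = k + b`; terms with `b > n` vanish). -/
def opStar (n k m : ℕ) : ℤ :=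
  2 * 4 ^ k * ∑ b ∈ Finset.range (n + 1),
    zchoose ((n : ℤ) - 1 + m - (k + b)) n * zchoose ((n : ℤ) - 1 - 2 * k) b

section Aux
open PowerSeries Finset


lemma zchoose_natCast (a b : ℕ) : zchoose a b = (a.choose b : ℤ) := by
  unfold zchoose
  split_ifs with h
  · simp
  · rw [Nat.choose_eq_zero_of_lt (by push_cast at h; omega)]; simp

lemma shift_lemma (n j : ℕ) :
    (PowerSeries.mk fun m : ℕ => zchoose ((n : ℤ) + m - j) n : ℤ⟦X⟧) * (1 - X) ^ (n + 1)
      = X ^ j := by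
  have h1 : (PowerSeries.mk fun m : ℕ => zchoose ((n : ℤ) + m - j) n : ℤ⟦X⟧)
      = X ^ j * PowerSeries.mk fun m : ℕ => ((n + m).choose n : ℤ) := by
    ext m
    rw [coeff_mk, coeff_X_pow_mul']
    split_ifs with h
    · rw [coeff_mk]
      have h2 : (n : ℤ) + m - j = ((n + (m - j) : ℕ) : ℤ) := by push_cast; omega
      rw [h2, zchoose_natCast]
    · unfold zchoose
      rw [if_neg (by omega)]
  rw [h1, mul_assoc, mk_add_choose_mul_one_sub_pow_eq_one, mul_one]

lemma main_lemma (n k : ℕ) (hk : 2 * k ≤ n) :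
    (PowerSeries.mk fun m => opL n k m : ℤ⟦X⟧) * (1 - X) ^ (n + 1) =
      (4 * X) ^ k * (1 + X) ^ (n - 2 * k) := by
  have h1 : (PowerSeries.mk fun m => opL n k m : ℤ⟦X⟧)
      = ∑ b ∈ range (n + 1), PowerSeries.C (R := ℤ) (4 ^ k * zchoose ((n : ℤ) - 2 * k) b) *
          PowerSeries.mk (fun m : ℕ => zchoose ((n : ℤ) + m - (k + b)) n) := by
    ext m
    simp only [opL, map_sum, coeff_mk, PowerSeries.coeff_C_mul, mul_sum]
    exact Finset.sum_congr rfl fun b _ => by ring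
  rw [h1, sum_mul]
  have h2 : ∀ b ∈ range (n + 1),
      PowerSeries.C (R := ℤ) (4 ^ k * zchoose ((n : ℤ) - 2 * k) b) *
          PowerSeries.mk (fun m : ℕ => zchoose ((n : ℤ) + m - (k + b)) n) * (1 - X) ^ (n + 1)
        = PowerSeries.C (R := ℤ) (4 ^ k * ((n - 2 * k).choose b : ℤ)) * X ^ (k + b) := by
    intro b _
    rw [mul_assoc]
    rw [show ((k : ℤ) + b) = ((k + b : ℕ) : ℤ) by push_cast; ring] 
    rw [shift_lemma]
    have : (n : ℤ) - 2 * k = ((n - 2 * k : ℕ) : ℤ) := by push_cast; omega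
    rw [this, zchoose_natCast]
  rw [Finset.sum_congr rfl h2]
  have h3 : ((4 : ℤ⟦X⟧) * X) ^ k * (1 + X) ^ (n - 2 * k)
      = ∑ b ∈ range (n - 2 * k + 1),
          PowerSeries.C (R := ℤ) (4 ^ k * ((n - 2 * k).choose b : ℤ)) * X ^ (k + b) := by
    rw [add_comm (1 : ℤ⟦X⟧) X, add_pow, mul_sum]
    refine Finset.sum_congr rfl fun b _ => ?_
    simp only [map_mul, map_pow, map_natCast, map_ofNat]
    rw [mul_pow, pow_add]
    push_cast
    ring
  rw [h3]
  symm
  apply Finset.sum_subset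
  · intro b hb; simp at hb ⊢; omega
  · intro b _ hb
    simp only [mem_range, not_lt] at hb
    rw [Nat.choose_eq_zero_of_lt (by omega)]
    simp

lemma two_lpk_le {n : ℕ} (π : Equiv.Perm (Fin n)) : 2 * lpk π ≤ n := by
  classical
  set S := ((Finset.Icc 1 (n - 1)).filter
    (fun i => pval π (i - 1) < pval π i ∧ pval π (i + 1) < pval π i)) with hS
  have hmem : ∀ i ∈ S, 1 ≤ i ∧ i ≤ n - 1 := by
    intro i hi
    simp only [hS, Finset.mem_filter, Finset.mem_Icc] at hi
    exact ⟨hi.1.1, hi.1.2⟩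
  have hnotadj : ∀ i ∈ S, i + 1 ∉ S := by
    intro i hi hi1
    simp only [hS, Finset.mem_filter, Finset.mem_Icc] at hi hi1
    have h1 := hi.2.2
    have h2 := hi1.2.1
    simp only [Nat.add_sub_cancel] at h2
    omega
  have hdisj : (S : Set ℕ).PairwiseDisjoint (fun i => ({i, i + 1} : Finset ℕ)) := by
    intro i hi j hj hij
    simp only [Finset.coe_mem, Finset.mem_coe] at hi hj
    have h1 : j ≠ i + 1 := fun h => hnotadj i hi (h ▸ hj)
    have h2 : i ≠ j + 1 := fun h => hnotadj j hj (h ▸ hi)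
    simp only [Finset.disjoint_left, Finset.mem_insert, Finset.mem_singleton]
    rintro a (rfl | rfl) <;> omega
  have hcard := Finset.card_biUnion hdisj
  have hsub : (S.biUnion fun i => ({i, i + 1} : Finset ℕ)) ⊆ Finset.Icc 1 n := by
    intro a ha
    simp only [Finset.mem_biUnion, Finset.mem_insert, Finset.mem_singleton] at ha
    obtain ⟨i, hi, h | h⟩ := ha
    · have := hmem i hi; simp only [Finset.mem_Icc]; omega
    · have := hmem i hi; simp only [Finset.mem_Icc]; omega
  have hle := Finset.card_le_card hsub
  rw [hcard] at hle
  have heach : ∀ i ∈ S, ({i, i + 1} : Finset ℕ).card = 2 := by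
    intro i _
    rw [Finset.card_insert_of_notMem (by simp), Finset.card_singleton]
  rw [Finset.sum_congr rfl heach, Finset.sum_const, smul_eq_mul, Nat.card_Icc] at hle
  have hlpk : lpk π = S.card := rfl
  omega

end Aux

theorem stmt15 (n : ℕ) (π : Equiv.Perm (Fin n)) :
    (PowerSeries.mk fun m => opL n (lpk π) m) * (1 - PowerSeries.X) ^ (n + 1) =
      (4 * PowerSeries.X) ^ lpk π * (1 + PowerSeries.X) ^ (n - 2 * lpk π) :=
  main_lemma n (lpk π) (two_lpk_le π)
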